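/- The Riccati update preserves positive semidefiniteness: if Q - M^T R^{-1} M is positive semidefinite, R is symmetric positive definite, and K' is symmetric positive semidefinite, then K = A^T K' A + Q - (A^T K' B + M^T)(R + B^T K' B)^{-1}(M + B^T K' A) is symmetric positive semidefinite. -/

import Mathlib

open Matrix

theorem stmt_7 (d d' m : ℕ)
    (A : Matrix (Fin d') (Fin d) ℝ)
    (B : Matrix (Fin d') (Fin m) ℝ)
    (Q : Matrix (Fin d) (Fin d) ℝ) (hQ : Q.IsSymm)
    (R : Matrix (Fin m) (Fin m) ℝ) (hR : R.PosDef)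
    (M : Matrix (Fin m) (Fin d) ℝ)
    (K' : Matrix (Fin d') (Fin d') ℝ) (hK' : K'.PosSemidef)
    (hSchur : (Q - Mᵀ * R⁻¹ * M).PosSemidef) :
    (Aᵀ * K' * A + Q -
        (Aᵀ * K' * B + Mᵀ) * (R + Bᵀ * K' * B)⁻¹ * (M + Bᵀ * K' * A)).PosSemidef := by
  have hBKB : (Bᵀ * K' * B).PosSemidef := hK'.conjTranspose_mul_mul_same B
  have hS : (R + Bᵀ * K' * B).PosDef := hR.add_posSemidef hBKB
  haveI : Invertible (R + Bᵀ * K' * B) := hS.isUnit.invertible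
  haveI : Invertible R := hR.isUnit.invertible
  -- transpose facts (over ℝ, conjTranspose = transpose)
  have hMT : (Mᵀ)ᴴ = M := by ext i j; simp [conjTranspose_apply]
  -- the stage-cost block matrix is PSD
  have h1 : (fromBlocks Q Mᵀ M R).PosSemidef := by
    have := (PosDef.fromBlocks₂₂ Q Mᵀ hR).mpr
    rw [hMT] at this
    exact this hSchur
  -- the lifted block matrix is PSD
  have h2 : (fromBlocks (Aᵀ * K' * A) (Aᵀ * K' * B) (Bᵀ * K' * A) (Bᵀ * K' * B)).PosSemidef := by
    have h := hK'.conjTranspose_mul_mul_same (fromCols A B)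
    rw [conjTranspose_fromCols_eq_fromRows_conjTranspose, fromRows_mul,
      fromRows_mul_fromCols] at h
    exact h
  have h3 : (fromBlocks (Q + Aᵀ * K' * A) (Mᵀ + Aᵀ * K' * B)
      (M + Bᵀ * K' * A) (R + Bᵀ * K' * B)).PosSemidef := by
    have := h1.add h2
    rwa [fromBlocks_add] at this
  have hBh : (Mᵀ + Aᵀ * K' * B)ᴴ = M + Bᵀ * K' * A := by
    have hK'h : K'ᴴ = K' := hK'.1
    have hAT : (Aᵀ)ᴴ = A := by ext i j; simp [conjTranspose_apply]
    rw [conjTranspose_add, hMT, conjTranspose_mul, conjTranspose_mul, hAT, hK'h,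
      ← Matrix.mul_assoc]
    rfl
  have h4 := (PosDef.fromBlocks₂₂ (Q + Aᵀ * K' * A) (Mᵀ + Aᵀ * K' * B) hS).mp
  rw [hBh] at h4
  have h5 := h4 h3
  rw [add_comm (Aᵀ * K' * A) Q, add_comm (Aᵀ * K' * B) Mᵀ]
  exact h5
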